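/- arXiv:2203.17099 — 2 statements merged into one kernel-verified Lean document; each statement's English description precedes it below -/
import Mathlib

section
/- Let H be a Hermitian matrix indexed by pairs (x,s), x ∈ {0,…,n−1} a site and s ∈ {A,B}, which is short range with parameters d > 0, K_d > 0. Let f : ℝ → ℂ be bounded and continuous with sup norm ‖f‖∞ = sup_{x∈ℝ}|f(x)|, and suppose there is a measurable g : ℝ → ℂ such that f(x) = (2π)⁻¹·∫_ℝ g(ω)·e^{iωx} dω for every x ∈ ℝ (the integral being absolutely convergent), and constants C_β, β > 0 with |g(ω)·ω| ≤ C_β·e^{−β|ω|} for all ω ∈ ℝ. Then for all sites x, y: ‖(f(H))_{x,y}‖ ≤ 4·(‖f‖∞ + C_β·K_d/β + C_β·|x−y|/d)·e^{−|x−y|/d'}, where d' = d·max(1, K_d/β) and f(H) is defined by functional calculus. -/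
open MeasureTheory
open scoped ComplexOrder

noncomputable section

namespace Chiral

/-- The ℓ²-operator norm of a square complex matrix. -/
def opNorm {n : Type*} [Fintype n] [DecidableEq n] (T : Matrix n n ℂ) : ℝ :=
  ‖Matrix.toEuclideanCLM (𝕜 := ℂ) T‖

/-- The trace norm `Tr √(T*T)` of a square complex matrix. -/
def traceNorm {n : Type*} [Fintype n] [DecidableEq n] (T : Matrix n n ℂ) : ℝ :=
  (((Matrix.posSemidef_conjTranspose_mul_self T).1.eigenvectorUnitary : Matrix n n ℂ) *
    Matrix.diagonal (fun i => ((√((Matrix.posSemidef_conjTranspose_mul_self T).1.eigenvalues i) : ℝ) : ℂ)) *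
    (star (Matrix.posSemidef_conjTranspose_mul_self T).1.eigenvectorUnitary : Matrix n n ℂ)).trace.re

open Classical in
/-- Functional calculus of a Hermitian matrix: same eigenvectors, eigenvalue `E`
replaced by `f E`.  (Junk value `0` if the matrix is not Hermitian.) -/
def matFun {n : Type*} [Fintype n] [DecidableEq n] (f : ℝ → ℂ) (H : Matrix n n ℂ) :
    Matrix n n ℂ :=
  if hH : H.IsHermitian then
    (hH.eigenvectorUnitary : Matrix n n ℂ) *
      Matrix.diagonal (fun i => f (hH.eigenvalues i)) *
      star (hH.eigenvectorUnitary : Matrix n n ℂ)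
  else 0

/-- The matrix exponential. -/
def matExp {n : Type*} [Fintype n] [DecidableEq n] (M : Matrix n n ℂ) : Matrix n n ℂ :=
  NormedSpace.exp M

/-- `S = tanh (H/δ)` by functional calculus. -/
def tanhOf {n : Type*} [Fintype n] [DecidableEq n] (δ : ℝ) (H : Matrix n n ℂ) :
    Matrix n n ℂ :=
  matFun (fun E => (Real.tanh (E / δ) : ℂ)) H

/-- Index set of the finite chain of length `L` with two internal degrees of freedom. -/
abbrev Site (L : ℕ) := Fin L × Fin 2

/-- The `2×2` block of a matrix on the chain corresponding to sites `x, y`. -/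
def matBlock {L : ℕ} (T : Matrix (Site L) (Site L) ℂ) (x y : Fin L) :
    Matrix (Fin 2) (Fin 2) ℂ :=
  Matrix.of fun s s' => T (x, s) (y, s')

/-- A finite Hamiltonian is short range with parameters `d`, `K`. -/
def FinShortRange {L : ℕ} (H : Matrix (Site L) (Site L) ℂ) (d K : ℝ) : Prop :=
  ∀ x : Fin L, ∑ y : Fin L,
    opNorm (matBlock H x y) * Real.exp (|((x : ℕ) : ℝ) - ((y : ℕ) : ℝ)| / d) ≤ K

/-- The chiral operator `C` on the finite chain: `+1` on the `A` component,
`-1` on the `B` component. -/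
def chiralC (L : ℕ) : Matrix (Site L) (Site L) ℂ :=
  Matrix.diagonal fun p => if p.2 = 0 then 1 else -1

/-- The diagonal matrix `θ(X)` associated to a switch function `θ`. -/
def switchX {L : ℕ} (θ : Fin L → ℝ) : Matrix (Site L) (Site L) ℂ :=
  Matrix.diagonal fun p => (θ p.1 : ℂ)

/-- The standard switch function: `1` on the left half (`x < L/2`), `0` on the right half. -/
def midSwitch (L : ℕ) : Fin L → ℝ := fun x => if ((x : ℕ) : ℝ) < (L : ℝ) / 2 then 1 else 0

/-- The edge index `Tr (C θ(X) (1 - S²))`. -/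
def edgeIndex {L : ℕ} (θ : Fin L → ℝ) (S : Matrix (Site L) (Site L) ℂ) : ℂ :=
  Matrix.trace (chiralC L * switchX θ * (1 - S * S))

/-- The bulk index `½ Tr (C S [θ(X), S])`. -/
def bulkIndex {L : ℕ} (θ : Fin L → ℝ) (S : Matrix (Site L) (Site L) ℂ) : ℂ :=
  (1 / 2 : ℂ) * Matrix.trace (chiralC L * S * (switchX θ * S - S * switchX θ))

/-- The bulk Hilbert space `ℓ²(ℤ; ℂ²)`. -/
abbrev BulkSpace := lp (fun _ : ℤ => EuclideanSpace ℂ (Fin 2)) 2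

/-- Bounded operators on the bulk Hilbert space. -/
abbrev BulkOp := BulkSpace →L[ℂ] BulkSpace

/-- The canonical basis vector at site `x` with internal index `s`. -/
def bvec (x : ℤ) (s : Fin 2) : BulkSpace := lp.single 2 x (EuclideanSpace.single s 1)

/-- The `2×2` block `T_{x,y}` of a bulk operator. -/
def bulkBlock (T : BulkOp) (x y : ℤ) : Matrix (Fin 2) (Fin 2) ℂ :=
  Matrix.of fun s s' => (inner ℂ (bvec x s) (T (bvec y s')) : ℂ)

/-- A bulk Hamiltonian is short range with parameters `d`, `K`:
`sup_x ∑_y ‖T_{x,y}‖ e^{|x-y|/d} ≤ K`. -/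
def BulkShortRange (T : BulkOp) (d K : ℝ) : Prop :=
  ∀ x : ℤ,
    Summable (fun y : ℤ => opNorm (bulkBlock T x y) * Real.exp (|((x : ℝ)) - ((y : ℝ))| / d)) ∧
    ∑' y : ℤ, opNorm (bulkBlock T x y) * Real.exp (|((x : ℝ)) - ((y : ℝ))| / d) ≤ K

/-- The spectrum of `T` does not meet the open interval `(-Δ, Δ)`. -/
def HasGap (T : BulkOp) (Δ : ℝ) : Prop :=
  ∀ r : ℝ, |r| < Δ → (r : ℂ) ∉ spectrum ℂ T

/-- The on-site chiral matrix `diag(1, -1)`. -/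
def c2 : Matrix (Fin 2) (Fin 2) ℂ := Matrix.diagonal fun s => if s = 0 then 1 else -1

/-- A bulk operator is chiral: it anticommutes with the bulk chiral operator
(expressed blockwise, which is equivalent). -/
def ChiralBulk (T : BulkOp) : Prop :=
  ∀ x y : ℤ, c2 * bulkBlock T x y + bulkBlock T x y * c2 = 0

/-- The restriction `ι* T ι` of a bulk operator to the finite open chain of length `L`. -/
def restrict (L : ℕ) (T : BulkOp) : Matrix (Site L) (Site L) ℂ :=
  Matrix.of fun p q => bulkBlock T ((p.1 : ℕ) : ℤ) ((q.1 : ℕ) : ℤ) p.2 q.2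

/-! ### auxiliary norm lemmas -/

section AuxNorm

variable {m : Type*} [Fintype m] [DecidableEq m]

lemma opNorm_nonneg' (A : Matrix m m ℂ) : 0 ≤ opNorm A := norm_nonneg _

lemma opNorm_mul_le' (A B : Matrix m m ℂ) : opNorm (A * B) ≤ opNorm A * opNorm B := by
  rw [opNorm, map_mul]; exact norm_mul_le _ _

lemma opNorm_one_le' : opNorm (1 : Matrix m m ℂ) ≤ 1 := by
  rw [opNorm, map_one]; exact ContinuousLinearMap.norm_id_le

lemma opNorm_zero' : opNorm (0 : Matrix m m ℂ) = 0 := by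
  rw [opNorm, map_zero, norm_zero]

lemma opNorm_sum_le' {ι : Type*} (s : Finset ι) (f : ι → Matrix m m ℂ) :
    opNorm (∑ i ∈ s, f i) ≤ ∑ i ∈ s, opNorm (f i) := by
  rw [opNorm, map_sum]; exact norm_sum_le _ _

lemma cs_sum (f g : m → ℝ) :
    ∑ i, f i * g i ≤ Real.sqrt (∑ i, f i ^ 2) * Real.sqrt (∑ i, g i ^ 2) := by
  have h := Finset.sum_mul_sq_le_sq_mul_sq Finset.univ f g
  calc ∑ i, f i * g i ≤ |∑ i, f i * g i| := le_abs_self _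
    _ = Real.sqrt ((∑ i, f i * g i) ^ 2) := (Real.sqrt_sq_eq_abs _).symm
    _ ≤ Real.sqrt ((∑ i, f i ^ 2) * ∑ i, g i ^ 2) := Real.sqrt_le_sqrt h
    _ = _ := Real.sqrt_mul (Finset.sum_nonneg fun i _ => sq_nonneg _) _

lemma toEuclideanCLM_apply_coord (A : Matrix m m ℂ) (x : EuclideanSpace ℂ m) (i : m) :
    (Matrix.toEuclideanCLM (𝕜 := ℂ) A x) i = ∑ j, A i j * x j := by
  have h := Matrix.ofLp_toEuclideanCLM (𝕜 := ℂ) A x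
  have := congrFun h i
  simpa [Matrix.toLin'_apply, Matrix.mulVec, dotProduct] using this

lemma coord_le_norm (w : EuclideanSpace ℂ m) (i : m) : ‖w i‖ ≤ ‖w‖ := by
  rw [EuclideanSpace.norm_eq]
  have h1 : ‖w i‖ = Real.sqrt (‖w i‖ ^ 2) := (Real.sqrt_sq (norm_nonneg _)).symm
  rw [h1]
  exact Real.sqrt_le_sqrt (Finset.single_le_sum (f := fun j => ‖w j‖ ^ 2)
    (fun j _ => sq_nonneg _) (Finset.mem_univ i))

lemma entry_le_opNorm (A : Matrix m m ℂ) (i j : m) : ‖A i j‖ ≤ opNorm A := by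
  have h1 : (Matrix.toEuclideanCLM (𝕜 := ℂ) A (EuclideanSpace.single j 1)) i = A i j := by
    rw [toEuclideanCLM_apply_coord]
    simp [EuclideanSpace.single_apply]
  calc ‖A i j‖ = ‖(Matrix.toEuclideanCLM (𝕜 := ℂ) A (EuclideanSpace.single j 1)) i‖ := by
        rw [h1]
    _ ≤ ‖Matrix.toEuclideanCLM (𝕜 := ℂ) A (EuclideanSpace.single j 1)‖ := coord_le_norm _ _
    _ ≤ opNorm A * ‖(EuclideanSpace.single j (1 : ℂ) : EuclideanSpace ℂ m)‖ :=
        (Matrix.toEuclideanCLM (𝕜 := ℂ) A).le_opNorm _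
    _ = opNorm A := by rw [EuclideanSpace.norm_single]; simp

end AuxNorm

lemma opNorm_fin2_le (A : Matrix (Fin 2) (Fin 2) ℂ) {c : ℝ}
    (h : ∀ s s', ‖A s s'‖ ≤ c) : opNorm A ≤ 2 * c := by
  have hc : 0 ≤ c := le_trans (norm_nonneg _) (h 0 0)
  refine ContinuousLinearMap.opNorm_le_bound _ (by positivity) fun v => ?_
  have hrow : ∀ i, ‖(Matrix.toEuclideanCLM (𝕜 := ℂ) A v) i‖ ≤ Real.sqrt (2 * c ^ 2) * ‖v‖ := by
    intro i
    rw [toEuclideanCLM_apply_coord]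
    have h0 : ‖∑ j, A i j * v j‖ ≤ ∑ j, ‖A i j‖ * ‖v j‖ := by
      refine (norm_sum_le _ _).trans (Finset.sum_le_sum fun j _ => ?_)
      rw [norm_mul]
    refine h0.trans ((cs_sum _ _).trans ?_)
    have h2 : Real.sqrt (∑ j, ‖v j‖ ^ 2) = ‖v‖ := (EuclideanSpace.norm_eq v).symm
    rw [h2]
    refine mul_le_mul_of_nonneg_right (Real.sqrt_le_sqrt ?_) (norm_nonneg v)
    have h3 : ∑ j : Fin 2, ‖A i j‖ ^ 2 ≤ ∑ _j : Fin 2, c ^ 2 :=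
      Finset.sum_le_sum fun j _ => pow_le_pow_left₀ (norm_nonneg _) (h i j) 2
    simpa [Fin.sum_univ_two, two_mul] using h3
  have hfin : ‖Matrix.toEuclideanCLM (𝕜 := ℂ) A v‖ ≤
      Real.sqrt (∑ _i : Fin 2, (Real.sqrt (2 * c ^ 2) * ‖v‖) ^ 2) := by
    rw [EuclideanSpace.norm_eq]
    exact Real.sqrt_le_sqrt (Finset.sum_le_sum fun i _ =>
      pow_le_pow_left₀ (norm_nonneg _) (hrow i) 2)
  refine hfin.trans ?_
  have he : ∑ _i : Fin 2, (Real.sqrt (2 * c ^ 2) * ‖v‖) ^ 2 = (2 * c * ‖v‖) ^ 2 := by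
    rw [Fin.sum_univ_two, mul_pow, Real.sq_sqrt (by positivity : (0:ℝ) ≤ 2 * c ^ 2)]
    ring
  rw [he, Real.sqrt_sq (by positivity)]

/-! ### spectral lemmas -/

section Spectral

variable {N : Type*} [Fintype N] [DecidableEq N] {H : Matrix N N ℂ}

lemma conj_diag_apply (hH : H.IsHermitian) (v : N → ℂ) (p q : N) :
    ((hH.eigenvectorUnitary : Matrix N N ℂ) * Matrix.diagonal v *
      star (hH.eigenvectorUnitary : Matrix N N ℂ)) p q
    = ∑ i, (hH.eigenvectorUnitary : Matrix N N ℂ) p i * v i *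
        star ((hH.eigenvectorUnitary : Matrix N N ℂ) q i) := by
  rw [Matrix.mul_apply]
  refine Finset.sum_congr rfl fun i _ => ?_
  rw [Matrix.mul_diagonal, Matrix.star_apply]

lemma matFun_apply (hH : H.IsHermitian) (f : ℝ → ℂ) (p q : N) :
    matFun f H p q = ∑ i, (hH.eigenvectorUnitary : Matrix N N ℂ) p i * f (hH.eigenvalues i) *
      star ((hH.eigenvectorUnitary : Matrix N N ℂ) q i) := by
  have : matFun f H = (hH.eigenvectorUnitary : Matrix N N ℂ) *
      Matrix.diagonal (fun i => f (hH.eigenvalues i)) *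
      star (hH.eigenvectorUnitary : Matrix N N ℂ) := by
    rw [matFun, dif_pos hH]
  rw [this, conj_diag_apply hH]

lemma pow_spectral (hH : H.IsHermitian) (k : ℕ) :
    H ^ k = (hH.eigenvectorUnitary : Matrix N N ℂ) *
      Matrix.diagonal (fun i => ((hH.eigenvalues i : ℝ) : ℂ) ^ k) *
      star (hH.eigenvectorUnitary : Matrix N N ℂ) := by
  have hU : (hH.eigenvectorUnitary : Matrix N N ℂ) *
      star (hH.eigenvectorUnitary : Matrix N N ℂ) = 1 :=
    Matrix.mem_unitaryGroup_iff.mp hH.eigenvectorUnitary.2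
  have hU' : star (hH.eigenvectorUnitary : Matrix N N ℂ) *
      (hH.eigenvectorUnitary : Matrix N N ℂ) = 1 :=
    Matrix.mem_unitaryGroup_iff'.mp hH.eigenvectorUnitary.2
  have hsp : H = (hH.eigenvectorUnitary : Matrix N N ℂ) *
      Matrix.diagonal (fun i => ((hH.eigenvalues i : ℝ) : ℂ)) *
      star (hH.eigenvectorUnitary : Matrix N N ℂ) := hH.spectral_theorem
  set U := (hH.eigenvectorUnitary : Matrix N N ℂ)
  set D2 := Matrix.diagonal (fun i => ((hH.eigenvalues i : ℝ) : ℂ)) with hD2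
  induction k with
  | zero =>
    simp only [pow_zero]
    have h1 : Matrix.diagonal (fun _ : N => (1 : ℂ)) = 1 := Matrix.diagonal_one
    rw [h1, Matrix.mul_one, hU]
  | succ k ih =>
    set D1 := Matrix.diagonal (fun i => ((hH.eigenvalues i : ℝ) : ℂ) ^ k) with hD1
    have step1 : H ^ (k + 1) = (U * D1 * star U) * (U * D2 * star U) := by
      rw [pow_succ, ih]
      congr 1
    rw [step1]
    calc U * D1 * star U * (U * D2 * star U)
        = U * (D1 * ((star U * U) * (D2 * star U))) := by
          simp only [Matrix.mul_assoc]
      _ = U * (D1 * (D2 * star U)) := by rw [hU', Matrix.one_mul]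
      _ = U * ((D1 * D2) * star U) := by rw [Matrix.mul_assoc]
      _ = U * (Matrix.diagonal (fun i => ((hH.eigenvalues i : ℝ) : ℂ) ^ (k + 1)) * star U) := by
          rw [hD1, hD2, Matrix.diagonal_mul_diagonal]
          have hfun : (fun i => ((hH.eigenvalues i : ℝ) : ℂ) ^ k * ((hH.eigenvalues i : ℝ) : ℂ))
              = fun i => ((hH.eigenvalues i : ℝ) : ℂ) ^ (k + 1) :=
            funext fun i => (pow_succ _ _).symm
          rw [hfun]
      _ = U * Matrix.diagonal (fun i => ((hH.eigenvalues i : ℝ) : ℂ) ^ (k + 1)) * star U :=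
          (Matrix.mul_assoc _ _ _).symm

lemma pow_apply (hH : H.IsHermitian) (k : ℕ) (p q : N) :
    (H ^ k) p q = ∑ i, (hH.eigenvectorUnitary : Matrix N N ℂ) p i *
      ((hH.eigenvalues i : ℝ) : ℂ) ^ k * star ((hH.eigenvectorUnitary : Matrix N N ℂ) q i) := by
  rw [pow_spectral hH k, conj_diag_apply hH]

lemma unitary_row_sq (hH : H.IsHermitian) (p : N) :
    ∑ i, ‖(hH.eigenvectorUnitary : Matrix N N ℂ) p i‖ ^ 2 = 1 := by
  have hU : (hH.eigenvectorUnitary : Matrix N N ℂ) *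
      star (hH.eigenvectorUnitary : Matrix N N ℂ) = 1 :=
    Matrix.mem_unitaryGroup_iff.mp hH.eigenvectorUnitary.2
  have h : ((hH.eigenvectorUnitary : Matrix N N ℂ) *
      star (hH.eigenvectorUnitary : Matrix N N ℂ)) p p = 1 := by
    rw [hU, Matrix.one_apply_eq]
  rw [Matrix.mul_apply] at h
  have h2 : ∀ i, (hH.eigenvectorUnitary : Matrix N N ℂ) p i *
      (star (hH.eigenvectorUnitary : Matrix N N ℂ)) i p
      = ((‖(hH.eigenvectorUnitary : Matrix N N ℂ) p i‖ ^ 2 : ℝ) : ℂ) := by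
    intro i
    rw [Matrix.star_apply]
    rw [show star ((hH.eigenvectorUnitary : Matrix N N ℂ) p i)
      = (starRingEnd ℂ) ((hH.eigenvectorUnitary : Matrix N N ℂ) p i) from rfl]
    rw [Complex.mul_conj]
    norm_cast
    exact Complex.normSq_eq_norm_sq _
  rw [Finset.sum_congr rfl fun i _ => h2 i] at h
  exact_mod_cast h

lemma norm_matFun_entry_le (hH : H.IsHermitian) {f : ℝ → ℂ} {c : ℝ}
    (h : ∀ i, ‖f (hH.eigenvalues i)‖ ≤ c) (p q : N) :
    ‖matFun f H p q‖ ≤ c := by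
  have hc : 0 ≤ c := le_trans (norm_nonneg _) (h p)
  rw [matFun_apply hH]
  refine (norm_sum_le _ _).trans ?_
  calc ∑ i, ‖(hH.eigenvectorUnitary : Matrix N N ℂ) p i * f (hH.eigenvalues i) *
        star ((hH.eigenvectorUnitary : Matrix N N ℂ) q i)‖
      ≤ ∑ i, ‖(hH.eigenvectorUnitary : Matrix N N ℂ) p i‖ *
        ‖(hH.eigenvectorUnitary : Matrix N N ℂ) q i‖ * c := by
        refine Finset.sum_le_sum fun i _ => ?_
        rw [norm_mul, norm_mul, norm_star]
        calc ‖(hH.eigenvectorUnitary : Matrix N N ℂ) p i‖ * ‖f (hH.eigenvalues i)‖ *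
              ‖(hH.eigenvectorUnitary : Matrix N N ℂ) q i‖
            = (‖(hH.eigenvectorUnitary : Matrix N N ℂ) p i‖ *
              ‖(hH.eigenvectorUnitary : Matrix N N ℂ) q i‖) * ‖f (hH.eigenvalues i)‖ := by ring
          _ ≤ (‖(hH.eigenvectorUnitary : Matrix N N ℂ) p i‖ *
              ‖(hH.eigenvectorUnitary : Matrix N N ℂ) q i‖) * c := by
              refine mul_le_mul_of_nonneg_left (h i) (by positivity)
          _ = _ := by ring
    _ = (∑ i, ‖(hH.eigenvectorUnitary : Matrix N N ℂ) p i‖ *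
        ‖(hH.eigenvectorUnitary : Matrix N N ℂ) q i‖) * c := by rw [Finset.sum_mul]
    _ ≤ (Real.sqrt (∑ i, ‖(hH.eigenvectorUnitary : Matrix N N ℂ) p i‖ ^ 2) *
        Real.sqrt (∑ i, ‖(hH.eigenvectorUnitary : Matrix N N ℂ) q i‖ ^ 2)) * c :=
        mul_le_mul_of_nonneg_right (cs_sum _ _) hc
    _ = c := by
        rw [unitary_row_sq hH p, unitary_row_sq hH q, Real.sqrt_one, one_mul, one_mul]

lemma norm_expEntry_le_one (hH : H.IsHermitian) (ω : ℝ) (p q : N) :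
    ‖matFun (fun t => Complex.exp (Complex.I * ω * t)) H p q‖ ≤ 1 := by
  refine norm_matFun_entry_le hH (fun i => ?_) p q
  rw [Complex.norm_exp]
  have h : (Complex.I * (ω : ℂ) * ((hH.eigenvalues i : ℝ) : ℂ)).re = 0 := by
    simp [Complex.mul_re, Complex.mul_im]
  rw [h, Real.exp_zero]

end Spectral

/-! ### chain lemmas -/

lemma matBlock_mul {L : ℕ} (A B : Matrix (Site L) (Site L) ℂ) (x y : Fin L) :
    matBlock (A * B) x y = ∑ z, matBlock A x z * matBlock B z y := by
  ext s s'
  have h1 : (∑ z, matBlock A x z * matBlock B z y) s s'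
      = ∑ z, ∑ t, A (x, s) (z, t) * B (z, t) (y, s') := by
    rw [Matrix.sum_apply]
    exact Finset.sum_congr rfl fun z _ => by rw [Matrix.mul_apply]; rfl
  rw [h1]
  show (A * B) (x, s) (y, s') = _
  rw [Matrix.mul_apply, Fintype.sum_prod_type]

lemma pow_block_decay {L : ℕ} {H : Matrix (Site L) (Site L) ℂ} {d Kd : ℝ}
    (hd : 0 < d) (hKd : 0 ≤ Kd) (hsr : FinShortRange H d Kd) :
    ∀ (k : ℕ) (x y : Fin L), opNorm (matBlock (H ^ k) x y)
      ≤ Kd ^ k * Real.exp (-(|((x : ℕ) : ℝ) - ((y : ℕ) : ℝ)| / d)) := by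
  intro k
  induction k with
  | zero =>
    intro x y
    by_cases hxy : x = y
    · subst hxy
      have hb : matBlock ((H : Matrix (Site L) (Site L) ℂ) ^ 0) x x = 1 := by
        rw [pow_zero]
        ext s s'
        simp [matBlock, Matrix.one_apply, Prod.ext_iff]
      rw [hb]
      simpa using opNorm_one_le'
    · have hb : matBlock ((H : Matrix (Site L) (Site L) ℂ) ^ 0) x y = 0 := by
        rw [pow_zero]
        ext s s'
        simp [matBlock, Matrix.one_apply, Prod.ext_iff, hxy]
      rw [hb, opNorm_zero']
      positivity
  | succ k ih =>
    intro x y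
    rw [pow_succ']
    rw [matBlock_mul]
    refine (opNorm_sum_le' _ _).trans ?_
    have step : ∀ z : Fin L, opNorm (matBlock H x z * matBlock (H ^ k) z y)
        ≤ (opNorm (matBlock H x z) * Real.exp (|((x : ℕ) : ℝ) - ((z : ℕ) : ℝ)| / d)) *
          (Kd ^ k * Real.exp (-(|((x : ℕ) : ℝ) - ((y : ℕ) : ℝ)| / d))) := by
      intro z
      refine (opNorm_mul_le' _ _).trans ?_
      have tri : |((x : ℕ) : ℝ) - ((y : ℕ) : ℝ)|
          ≤ |((x : ℕ) : ℝ) - ((z : ℕ) : ℝ)| + |((z : ℕ) : ℝ) - ((y : ℕ) : ℝ)| :=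
        abs_sub_le _ _ _
      have h2 : Real.exp (-(|((z : ℕ) : ℝ) - ((y : ℕ) : ℝ)| / d))
          ≤ Real.exp (|((x : ℕ) : ℝ) - ((z : ℕ) : ℝ)| / d) *
            Real.exp (-(|((x : ℕ) : ℝ) - ((y : ℕ) : ℝ)| / d)) := by
        rw [← Real.exp_add]
        apply Real.exp_le_exp.mpr
        have h3 : (|((x : ℕ) : ℝ) - ((y : ℕ) : ℝ)| - |((x : ℕ) : ℝ) - ((z : ℕ) : ℝ)|) / d
            ≤ |((z : ℕ) : ℝ) - ((y : ℕ) : ℝ)| / d :=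
          (div_le_div_iff_of_pos_right hd).mpr (by linarith)
        rw [sub_div] at h3
        linarith
      calc opNorm (matBlock H x z) * opNorm (matBlock (H ^ k) z y)
          ≤ opNorm (matBlock H x z) *
            (Kd ^ k * Real.exp (-(|((z : ℕ) : ℝ) - ((y : ℕ) : ℝ)| / d))) :=
            mul_le_mul_of_nonneg_left (ih z y) (opNorm_nonneg' _)
        _ ≤ opNorm (matBlock H x z) * (Kd ^ k *
            (Real.exp (|((x : ℕ) : ℝ) - ((z : ℕ) : ℝ)| / d) *
             Real.exp (-(|((x : ℕ) : ℝ) - ((y : ℕ) : ℝ)| / d)))) := by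
            refine mul_le_mul_of_nonneg_left ?_ (opNorm_nonneg' _)
            exact mul_le_mul_of_nonneg_left h2 (pow_nonneg hKd _)
        _ = _ := by ring
    refine (Finset.sum_le_sum fun z _ => step z).trans ?_
    rw [← Finset.sum_mul]
    calc (∑ z, opNorm (matBlock H x z) * Real.exp (|((x : ℕ) : ℝ) - ((z : ℕ) : ℝ)| / d)) *
          (Kd ^ k * Real.exp (-(|((x : ℕ) : ℝ) - ((y : ℕ) : ℝ)| / d)))
        ≤ Kd * (Kd ^ k * Real.exp (-(|((x : ℕ) : ℝ) - ((y : ℕ) : ℝ)| / d))) :=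
          mul_le_mul_of_nonneg_right (hsr x) (by positivity)
      _ = _ := by ring

lemma norm_expEntry_decay {L : ℕ} {H : Matrix (Site L) (Site L) ℂ} (hH : H.IsHermitian)
    {d Kd : ℝ} (hd : 0 < d) (hKd : 0 < Kd) (hsr : FinShortRange H d Kd)
    {x y : Fin L} (hxy : x ≠ y) (s s' : Fin 2) (ω : ℝ) :
    ‖matFun (fun u => Complex.exp (Complex.I * ω * u)) H (x, s) (y, s')‖ ≤
      |ω| * Kd * Real.exp (|ω| * Kd) *
        Real.exp (-(|((x : ℕ) : ℝ) - ((y : ℕ) : ℝ)| / d)) := by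
  classical
  set p : Site L := (x, s) with hp
  set q : Site L := (y, s') with hq
  set D : ℝ := Real.exp (-(|((x : ℕ) : ℝ) - ((y : ℕ) : ℝ)| / d)) with hD
  have hD0 : 0 < D := Real.exp_pos _
  set t : ℝ := |ω| * Kd with ht
  have ht0 : 0 ≤ t := mul_nonneg (abs_nonneg _) hKd.le
  have hpow : ∀ k : ℕ, ‖(H ^ k) p q‖ ≤ Kd ^ k * D := by
    intro k
    have h1 : ‖(H ^ k) p q‖ ≤ opNorm (matBlock (H ^ k) x y) := by
      simpa [matBlock] using entry_le_opNorm (matBlock (H ^ k) x y) s s'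
    exact h1.trans (pow_block_decay hd hKd.le hsr k x y)
  set G : ℕ → ℂ := fun k => (Complex.I * ω) ^ k / ((k.factorial : ℕ) : ℂ) * (H ^ k) p q with hG
  have hrepr : matFun (fun u => Complex.exp (Complex.I * ω * u)) H p q = ∑' k : ℕ, G k := by
    rw [matFun_apply hH]
    have hexp : ∀ i : Site L, Complex.exp (Complex.I * ω * ((hH.eigenvalues i : ℝ) : ℂ))
        = ∑' k : ℕ, (Complex.I * ω * ((hH.eigenvalues i : ℝ) : ℂ)) ^ k /
            ((k.factorial : ℕ) : ℂ) := by
      intro i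
      rw [Complex.exp_eq_exp_ℂ, NormedSpace.exp_eq_tsum_div]
    have hsummand : ∀ i : Site L, Summable (fun k : ℕ =>
        (hH.eigenvectorUnitary : Matrix (Site L) (Site L) ℂ) p i *
          ((Complex.I * ω * ((hH.eigenvalues i : ℝ) : ℂ)) ^ k / ((k.factorial : ℕ) : ℂ)) *
          star ((hH.eigenvectorUnitary : Matrix (Site L) (Site L) ℂ) q i)) := fun i =>
      ((NormedSpace.expSeries_div_summable
        (Complex.I * ω * ((hH.eigenvalues i : ℝ) : ℂ))).mul_left _).mul_right _
    calc ∑ i, (hH.eigenvectorUnitary : Matrix (Site L) (Site L) ℂ) p i *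
          Complex.exp (Complex.I * ω * ((hH.eigenvalues i : ℝ) : ℂ)) *
          star ((hH.eigenvectorUnitary : Matrix (Site L) (Site L) ℂ) q i)
        = ∑ i, ∑' k : ℕ, (hH.eigenvectorUnitary : Matrix (Site L) (Site L) ℂ) p i *
            ((Complex.I * ω * ((hH.eigenvalues i : ℝ) : ℂ)) ^ k / ((k.factorial : ℕ) : ℂ)) *
            star ((hH.eigenvectorUnitary : Matrix (Site L) (Site L) ℂ) q i) := by
          refine Finset.sum_congr rfl fun i _ => ?_
          rw [hexp i, ← tsum_mul_left, ← tsum_mul_right]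
      _ = ∑' k : ℕ, ∑ i, (hH.eigenvectorUnitary : Matrix (Site L) (Site L) ℂ) p i *
            ((Complex.I * ω * ((hH.eigenvalues i : ℝ) : ℂ)) ^ k / ((k.factorial : ℕ) : ℂ)) *
            star ((hH.eigenvectorUnitary : Matrix (Site L) (Site L) ℂ) q i) :=
          (Summable.tsum_finsetSum fun i _ => hsummand i).symm
      _ = ∑' k : ℕ, G k := by
          refine tsum_congr fun k => ?_
          simp only [hG]
          rw [pow_apply hH k p q, Finset.mul_sum]
          refine Finset.sum_congr rfl fun i _ => ?_
          rw [mul_pow]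
          ring
  have hGnorm : ∀ k : ℕ, ‖G k‖ ≤ t ^ k / ((k.factorial : ℕ) : ℝ) * D := by
    intro k
    have hn1 : ‖(Complex.I * (ω : ℂ)) ^ k / ((k.factorial : ℕ) : ℂ)‖
        = |ω| ^ k / ((k.factorial : ℕ) : ℝ) := by
      rw [norm_div, norm_pow, norm_mul, Complex.norm_I, one_mul, Complex.norm_real,
        Real.norm_eq_abs, RCLike.norm_natCast]
    calc ‖G k‖ = ‖(Complex.I * (ω : ℂ)) ^ k / ((k.factorial : ℕ) : ℂ)‖ * ‖(H ^ k) p q‖ :=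
          norm_mul _ _
      _ ≤ |ω| ^ k / ((k.factorial : ℕ) : ℝ) * (Kd ^ k * D) := by
          rw [hn1]
          exact mul_le_mul_of_nonneg_left (hpow k) (by positivity)
      _ = t ^ k / ((k.factorial : ℕ) : ℝ) * D := by
          rw [ht, mul_pow]
          ring
  have hsumG : Summable (fun k : ℕ => ‖G k‖) := by
    refine Summable.of_nonneg_of_le (fun k => norm_nonneg _) hGnorm ?_
    exact (Real.summable_pow_div_factorial t).mul_right D
  have hG0 : G 0 = 0 := by
    have hpq : p ≠ q := fun hc => hxy (congrArg Prod.fst hc)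
    have h0 : (H ^ 0) p q = 0 := by
      rw [pow_zero]
      exact Matrix.one_apply_ne hpq
    simp [hG, h0, Matrix.one_apply_ne hpq]
  have hexpt : ∑' k : ℕ, t ^ k / ((k.factorial : ℕ) : ℝ) = Real.exp t := by
    rw [Real.exp_eq_exp_ℝ, NormedSpace.exp_eq_tsum_div]
  calc ‖matFun (fun u => Complex.exp (Complex.I * ω * u)) H p q‖
      = ‖∑' k : ℕ, G k‖ := by rw [hrepr]
    _ ≤ ∑' k : ℕ, ‖G k‖ := norm_tsum_le_tsum_norm hsumG
    _ = ‖G 0‖ + ∑' k : ℕ, ‖G (k + 1)‖ := Summable.tsum_eq_zero_add hsumG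
    _ = ∑' k : ℕ, ‖G (k + 1)‖ := by rw [hG0, norm_zero, zero_add]
    _ ≤ ∑' k : ℕ, t * (t ^ k / ((k.factorial : ℕ) : ℝ)) * D := by
        refine Summable.tsum_le_tsum (fun k => ?_) ((summable_nat_add_iff 1).mpr hsumG) ?_
        · refine (hGnorm (k + 1)).trans ?_
          refine mul_le_mul_of_nonneg_right ?_ hD0.le
          rw [pow_succ']
          rw [Nat.factorial_succ]
          push_cast
          rw [mul_div_assoc]
          refine mul_le_mul_of_nonneg_left ?_ ht0
          refine div_le_div_of_nonneg_left (pow_nonneg ht0 k)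
            (by exact_mod_cast k.factorial_pos) ?_
          have h1 : (0 : ℝ) ≤ (k : ℝ) := Nat.cast_nonneg k
          nlinarith [show (0:ℝ) < ((k.factorial : ℕ) : ℝ) from by exact_mod_cast k.factorial_pos]
        · exact ((Real.summable_pow_div_factorial t).mul_left t).mul_right D
    _ = t * Real.exp t * D := by
        rw [tsum_mul_right, tsum_mul_left, hexpt]
    _ = |ω| * Kd * Real.exp (|ω| * Kd) * D := by rw [ht]

lemma matFun_entry_rep {L : ℕ} {H : Matrix (Site L) (Site L) ℂ} (hH : H.IsHermitian)
    (f g : ℝ → ℂ)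
    (hg_int : ∀ x : ℝ, Integrable (fun ω : ℝ => g ω * Complex.exp (Complex.I * ω * x)))
    (hrep : ∀ x : ℝ,
      f x = ((2 * Real.pi : ℝ) : ℂ)⁻¹ * ∫ ω : ℝ, g ω * Complex.exp (Complex.I * ω * x))
    (p q : Site L) :
    Integrable (fun ω : ℝ =>
      g ω * matFun (fun u => Complex.exp (Complex.I * ω * u)) H p q) ∧
    matFun f H p q = ((2 * Real.pi : ℝ) : ℂ)⁻¹ *
      ∫ ω : ℝ, g ω * matFun (fun u => Complex.exp (Complex.I * ω * u)) H p q := by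
  classical
  set U : Matrix (Site L) (Site L) ℂ := (hH.eigenvectorUnitary : Matrix (Site L) (Site L) ℂ)
    with hU
  have key : (fun ω : ℝ => g ω * matFun (fun u => Complex.exp (Complex.I * ω * u)) H p q)
      = fun ω : ℝ => ∑ i, U p i *
          (g ω * Complex.exp (Complex.I * ω * ((hH.eigenvalues i : ℝ) : ℂ))) * star (U q i) := by
    funext ω
    rw [matFun_apply hH, Finset.mul_sum]
    exact Finset.sum_congr rfl fun i _ => by ring
  have hint : ∀ i : Site L, Integrable (fun ω : ℝ => U p i *
      (g ω * Complex.exp (Complex.I * ω * ((hH.eigenvalues i : ℝ) : ℂ))) * star (U q i)) :=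
    fun i => ((hg_int (hH.eigenvalues i)).const_mul (U p i)).mul_const _
  constructor
  · rw [key]
    exact integrable_finset_sum _ fun i _ => hint i
  · rw [matFun_apply hH]
    have step1 : ∀ i : Site L, U p i * f (hH.eigenvalues i) * star (U q i)
        = ((2 * Real.pi : ℝ) : ℂ)⁻¹ * ∫ ω : ℝ, U p i *
            (g ω * Complex.exp (Complex.I * ω * ((hH.eigenvalues i : ℝ) : ℂ))) * star (U q i) := by
      intro i
      rw [hrep (hH.eigenvalues i)]
      rw [MeasureTheory.integral_mul_const, MeasureTheory.integral_const_mul]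
      ring
    rw [Finset.sum_congr rfl fun i _ => step1 i, ← Finset.mul_sum]
    congr 1
    rw [← integral_finset_sum _ fun i _ => hint i]
    rw [key]

/-! ### integral tail lemmas -/

lemma compl_Icc_eq (T : ℝ) : (Set.Icc (-T) T)ᶜ = Set.Iio (-T) ∪ Set.Ioi T := by
  ext u
  simp only [Set.mem_compl_iff, Set.mem_Icc, not_and_or, not_le, Set.mem_union, Set.mem_Iio,
    Set.mem_Ioi]

lemma integrableOn_exp_neg_abs_compl {β T : ℝ} (hβ : 0 < β) (hT : 0 < T) :
    IntegrableOn (fun ω : ℝ => Real.exp (-β * |ω|)) (Set.Icc (-T) T)ᶜ := by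
  have habs_Ioi : IntegrableOn (fun ω : ℝ => Real.exp (-β * |ω|)) (Set.Ioi T) := by
    refine (exp_neg_integrableOn_Ioi T hβ).congr_fun ?_ measurableSet_Ioi
    intro u hu
    show Real.exp (-β * u) = Real.exp (-β * |u|)
    rw [abs_of_pos (hT.trans hu)]
  have A : MeasurableEmbedding (fun x : ℝ => -x) :=
    (Homeomorph.neg ℝ).isClosedEmbedding.measurableEmbedding
  have habs_Iio : IntegrableOn (fun ω : ℝ => Real.exp (-β * |ω|)) (Set.Iio (-T)) := by
    have h1 : IntegrableOn (fun ω : ℝ => Real.exp (-β * |ω|)) (Set.Ioi T)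
        (Measure.map (fun x : ℝ => -x) volume) := by
      rw [Measure.map_neg_eq_self]
      exact habs_Ioi
    have h2 := A.integrableOn_map_iff.mp h1
    have hpre : (fun x : ℝ => -x) ⁻¹' Set.Ioi T = Set.Iio (-T) := by
      ext u
      simp only [Set.mem_preimage, Set.mem_Ioi, Set.mem_Iio]
      constructor <;> intro h <;> linarith
    have hfun : ((fun ω : ℝ => Real.exp (-β * |ω|)) ∘ (fun x : ℝ => -x))
        = fun ω : ℝ => Real.exp (-β * |ω|) := by
      funext u
      simp [abs_neg]
    rwa [hpre, hfun] at h2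
  rw [compl_Icc_eq]
  exact habs_Iio.union habs_Ioi

lemma integral_exp_neg_abs_compl {β T : ℝ} (hβ : 0 < β) (hT : 0 < T) :
    ∫ ω in (Set.Icc (-T) T)ᶜ, Real.exp (-β * |ω|) = 2 * (β⁻¹ * Real.exp (-(β * T))) := by
  have hsw : (fun ω : ℝ => ((Set.Icc (-T) T)ᶜ).indicator (fun u => Real.exp (-β * |u|)) ω)
      = fun ω : ℝ => (Set.Ioi T).indicator (fun u => Real.exp (-β * u)) |ω| := by
    funext ω
    by_cases hm : T < |ω|
    · have h1 : ω ∈ (Set.Icc (-T) T)ᶜ := by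
        simp only [Set.mem_compl_iff, Set.mem_Icc, not_and_or, not_le]
        rcases lt_abs.mp hm with h | h
        · right; exact h
        · left; linarith
      rw [Set.indicator_of_mem h1, Set.indicator_of_mem (Set.mem_Ioi.mpr hm)]
    · push_neg at hm
      have h1 : ω ∉ (Set.Icc (-T) T)ᶜ :=
        Set.notMem_compl_iff.mpr (Set.mem_Icc.mpr (abs_le.mp hm))
      have h2 : |ω| ∉ Set.Ioi T := fun hc => absurd (Set.mem_Ioi.mp hc) (not_lt.mpr hm)
      rw [Set.indicator_of_notMem h1, Set.indicator_of_notMem h2]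
  rw [← MeasureTheory.integral_indicator measurableSet_Icc.compl]
  rw [hsw]
  rw [integral_comp_abs (f := fun u => (Set.Ioi T).indicator (fun v => Real.exp (-β * v)) u)]
  rw [MeasureTheory.setIntegral_indicator measurableSet_Ioi]
  rw [Set.inter_eq_right.mpr (Set.Ioi_subset_Ioi hT.le)]
  have h7 := integral_comp_mul_left_Ioi (fun u => Real.exp (-u)) T hβ
  simp only [smul_eq_mul] at h7
  rw [integral_exp_neg_Ioi] at h7
  rw [show (fun x : ℝ => Real.exp (-β * x)) = fun x : ℝ => Real.exp (-(β * x)) from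
    funext fun x => by rw [neg_mul]]
  rw [h7]

lemma norm_integral_split {β T C1 C2 : ℝ} (hβ : 0 < β) (hT : 0 < T) (hC2 : 0 ≤ C2)
    (φ : ℝ → ℂ) (hφint : Integrable φ)
    (h1 : ∀ ω ∈ Set.Icc (-T) T, ‖φ ω‖ ≤ C1)
    (h2 : ∀ ω ∈ (Set.Icc (-T) T)ᶜ, ‖φ ω‖ ≤ C2 * Real.exp (-β * |ω|)) :
    ‖∫ ω : ℝ, φ ω‖ ≤ C1 * (2 * T) + C2 * (2 * (β⁻¹ * Real.exp (-(β * T)))) := by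
  have hsplitI : ∫ ω : ℝ, φ ω
      = (∫ ω in Set.Icc (-T) T, φ ω) + ∫ ω in (Set.Icc (-T) T)ᶜ, φ ω :=
    (integral_add_compl measurableSet_Icc hφint).symm
  have hvol : volume (Set.Icc (-T) T) < ⊤ := by
    rw [Real.volume_Icc]; exact ENNReal.ofReal_lt_top
  have hI1 : ‖∫ ω in Set.Icc (-T) T, φ ω‖ ≤ C1 * (2 * T) := by
    have hb := norm_setIntegral_le_of_norm_le_const hvol h1
    have hveq : (volume (Set.Icc (-T) T)).toReal = 2 * T := by
      rw [Real.volume_Icc, ENNReal.toReal_ofReal (by linarith)]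
      ring
    rwa [measureReal_def, hveq] at hb
  have hI2 : ‖∫ ω in (Set.Icc (-T) T)ᶜ, φ ω‖ ≤ C2 * (2 * (β⁻¹ * Real.exp (-(β * T)))) := by
    calc ‖∫ ω in (Set.Icc (-T) T)ᶜ, φ ω‖
        ≤ ∫ ω in (Set.Icc (-T) T)ᶜ, ‖φ ω‖ := norm_integral_le_integral_norm _
      _ ≤ ∫ ω in (Set.Icc (-T) T)ᶜ, C2 * Real.exp (-β * |ω|) :=
          setIntegral_mono_on hφint.norm.integrableOn
            ((integrableOn_exp_neg_abs_compl hβ hT).const_mul C2) measurableSet_Icc.compl h2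
      _ = C2 * ∫ ω in (Set.Icc (-T) T)ᶜ, Real.exp (-β * |ω|) :=
          MeasureTheory.integral_const_mul _ _
      _ = C2 * (2 * (β⁻¹ * Real.exp (-(β * T)))) := by
          rw [integral_exp_neg_abs_compl hβ hT]
  rw [hsplitI]
  exact (norm_add_le _ _).trans (add_le_add hI1 hI2)


set_option maxHeartbeats 2000000 in
theorem stmt4 {n : ℕ}
    (H : Matrix (Site n) (Site n) ℂ) (hH : H.IsHermitian)
    (d Kd : ℝ) (hd : 0 < d) (hKd : 0 < Kd) (hsr : FinShortRange H d Kd)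
    (f : ℝ → ℂ) (hf_cont : Continuous f)
    (hf_bdd : BddAbove (Set.range fun t : ℝ => ‖f t‖))
    (g : ℝ → ℂ) (hg_meas : Measurable g)
    (hg_int : ∀ x : ℝ, Integrable (fun ω : ℝ => g ω * Complex.exp (Complex.I * ω * x)))
    (hrep : ∀ x : ℝ,
      f x = ((2 * Real.pi : ℝ) : ℂ)⁻¹ * ∫ ω : ℝ, g ω * Complex.exp (Complex.I * ω * x))
    (Cβ β : ℝ) (hCβ : 0 < Cβ) (hβ : 0 < β)
    (hg_decay : ∀ ω : ℝ, ‖g ω * ω‖ ≤ Cβ * Real.exp (-β * |ω|)) :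
    ∀ x y : Fin n,
      opNorm (matBlock (matFun f H) x y) ≤
        4 * ((⨆ t : ℝ, ‖f t‖) + Cβ * Kd / β +
              Cβ * |((x : ℕ) : ℝ) - ((y : ℕ) : ℝ)| / d) *
          Real.exp (-|((x : ℕ) : ℝ) - ((y : ℕ) : ℝ)| / (d * max 1 (Kd / β))) := by
  intro x y
  classical
  set M : ℝ := ⨆ t : ℝ, ‖f t‖ with hM
  have hMle : ∀ u : ℝ, ‖f u‖ ≤ M := fun u => le_ciSup hf_bdd u
  have hM0 : 0 ≤ M := le_trans (norm_nonneg (f 0)) (hMle 0)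
  set r : ℝ := |((x : ℕ) : ℝ) - ((y : ℕ) : ℝ)| with hr
  have hr0 : 0 ≤ r := abs_nonneg _
  set dm : ℝ := max 1 (Kd / β) with hdm
  have hdm1 : (1 : ℝ) ≤ dm := le_max_left _ _
  set d' : ℝ := d * dm with hd'
  have hd'0 : 0 < d' := mul_pos hd (lt_of_lt_of_le one_pos hdm1)
  have hdd' : d ≤ d' := by nlinarith
  set mm : ℝ := max Kd β with hmm
  have hmm0 : 0 < mm := lt_of_lt_of_le hβ (le_max_right _ _)
  have hKdmm : Kd ≤ mm := le_max_left _ _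
  have hβmm : β ≤ mm := le_max_right _ _
  have hdmeq : dm = mm / β := by
    rw [hdm, hmm, show (1 : ℝ) = β / β from (div_self hβ.ne').symm,
      max_div_div_right hβ.le, max_comm]
  have hX0 : 0 ≤ Cβ * (Kd / β) := mul_nonneg hCβ.le (div_nonneg hKd.le hβ.le)
  have hY0 : 0 ≤ Cβ * (r / d) := mul_nonneg hCβ.le (div_nonneg hr0 hd.le)
  by_cases hcase : r ≤ d' * Real.log 2
  · -- trivial branch
    have hent : ∀ s s' : Fin 2, ‖matFun f H (x, s) (y, s')‖ ≤ M := fun s s' =>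
      norm_matFun_entry_le hH (fun i => by exact hMle _) _ _
    have hblk : opNorm (matBlock (matFun f H) x y) ≤ 2 * M :=
      opNorm_fin2_le _ fun s s' => hent s s'
    refine hblk.trans ?_
    have hEhalf : (2 : ℝ)⁻¹ ≤ Real.exp (-r / d') := by
      rw [show (2 : ℝ)⁻¹ = Real.exp (-Real.log 2) from by
        rw [Real.exp_neg, Real.exp_log (by norm_num : (0 : ℝ) < 2)], neg_div]
      apply Real.exp_le_exp.mpr
      apply neg_le_neg
      rw [div_le_iff₀ hd'0]
      linarith [hcase, mul_comm d' (Real.log 2)]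
    have hE2 : (0 : ℝ) < Real.exp (-r / d') := Real.exp_pos _
    calc 2 * M = 4 * M * (2 : ℝ)⁻¹ := by ring
      _ ≤ 4 * M * Real.exp (-r / d') :=
          mul_le_mul_of_nonneg_left hEhalf (by linarith : (0:ℝ) ≤ 4 * M)
      _ ≤ 4 * (M + Cβ * Kd / β + Cβ * r / d) * Real.exp (-r / d') := by
          apply mul_le_mul_of_nonneg_right _ hE2.le
          have h1 : Cβ * Kd / β = Cβ * (Kd / β) := by ring
          have h2 : Cβ * r / d = Cβ * (r / d) := by ring
          rw [h1, h2]
          linarith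
  · push_neg at hcase
    have hlog2 : (0.6931471803 : ℝ) < Real.log 2 := Real.log_two_gt_d9
    have hrpos : 0 < r := lt_trans (mul_pos hd'0 (by linarith)) hcase
    have hxy : x ≠ y := by
      intro hc
      apply absurd hrpos
      simp [hr, hc]
    have hd2r : d ≤ 2 * r := by
      nlinarith [mul_le_mul_of_nonneg_right hdd'
          (le_of_lt (lt_trans (by norm_num : (0:ℝ) < 0.6931471803) hlog2)),
        mul_pos hd (sub_pos.mpr hlog2)]
    have hrd2 : (1 : ℝ) ≤ 2 * (r / d) := by
      rw [show (2 : ℝ) * (r / d) = 2 * r / d from by ring, le_div_iff₀ hd]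
      linarith
    set T : ℝ := r / (d * mm) with hT
    have hT0 : 0 < T := div_pos hrpos (mul_pos hd hmm0)
    have hid1 : (mm - β) * T + -(r / d) = -(r / d') := by
      rw [hT, hd', hdmeq]
      field_simp
      ring
    have hid2 : -(β * T) = -(r / d') := by
      rw [hT, hd', hdmeq]
      field_simp
    set E : ℝ := Real.exp (-(r / d')) with hE
    have hE0 : 0 < E := Real.exp_pos _
    have hexpE1 : Real.exp ((mm - β) * T) * Real.exp (-(r / d)) = E := by
      rw [← Real.exp_add, hid1]
    have hexpE2 : Real.exp (-(β * T)) = E := by rw [hid2]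
    have hent : ∀ s s' : Fin 2, ‖matFun f H (x, s) (y, s')‖ ≤
        2 * (M + Cβ * (Kd / β) + Cβ * (r / d)) * E := by
      intro s s'
      obtain ⟨hφint, hrepE⟩ := matFun_entry_rep hH f g hg_int hrep (x, s) (y, s')
      rw [hrepE, norm_mul]
      have hc2π : ‖(((2 * Real.pi : ℝ)) : ℂ)⁻¹‖ = (2 * Real.pi)⁻¹ := by
        rw [norm_inv, Complex.norm_real, Real.norm_eq_abs, abs_of_pos Real.two_pi_pos]
      rw [hc2π]
      have h1 : ∀ ω ∈ Set.Icc (-T) T,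
          ‖g ω * matFun (fun u => Complex.exp (Complex.I * ω * u)) H (x, s) (y, s')‖
          ≤ Cβ * Kd * Real.exp ((mm - β) * T) * Real.exp (-(r / d)) := by
        intro ω hω
        have hωT : |ω| ≤ T := abs_le.mpr ⟨hω.1, hω.2⟩
        have hdec := norm_expEntry_decay hH hd hKd hsr hxy s s' ω
        have habs : ‖g ω * (ω : ℂ)‖ = ‖g ω‖ * |ω| := by
          rw [norm_mul, Complex.norm_real, Real.norm_eq_abs]
        have hgd' : ‖g ω‖ * |ω| ≤ Cβ * Real.exp (-β * |ω|) := by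
          rw [← habs]; exact hg_decay ω
        have hexp1 : (Kd - β) * |ω| ≤ (mm - β) * T := by
          have e1 : (Kd - β) * |ω| ≤ (mm - β) * |ω| :=
            mul_le_mul_of_nonneg_right (by linarith) (abs_nonneg ω)
          have e2 : (mm - β) * |ω| ≤ (mm - β) * T :=
            mul_le_mul_of_nonneg_left hωT (by linarith)
          linarith
        calc ‖g ω * matFun (fun u => Complex.exp (Complex.I * ω * u)) H (x, s) (y, s')‖
            = ‖g ω‖ * ‖matFun (fun u => Complex.exp (Complex.I * ω * u)) H (x, s) (y, s')‖ :=
              norm_mul _ _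
          _ ≤ ‖g ω‖ * (|ω| * Kd * Real.exp (|ω| * Kd) * Real.exp (-(r / d))) :=
              mul_le_mul_of_nonneg_left hdec (norm_nonneg _)
          _ = (‖g ω‖ * |ω|) * (Kd * Real.exp (|ω| * Kd) * Real.exp (-(r / d))) := by ring
          _ ≤ (Cβ * Real.exp (-β * |ω|)) * (Kd * Real.exp (|ω| * Kd) * Real.exp (-(r / d))) :=
              mul_le_mul_of_nonneg_right hgd'
                (mul_nonneg (mul_nonneg hKd.le (Real.exp_pos _).le) (Real.exp_pos _).le)
          _ = Cβ * Kd * (Real.exp (-β * |ω|) * Real.exp (|ω| * Kd)) * Real.exp (-(r / d)) := by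
              ring
          _ = Cβ * Kd * Real.exp ((Kd - β) * |ω|) * Real.exp (-(r / d)) := by
              rw [← Real.exp_add, show -β * |ω| + |ω| * Kd = (Kd - β) * |ω| from by ring]
          _ ≤ Cβ * Kd * Real.exp ((mm - β) * T) * Real.exp (-(r / d)) := by
              have hm := Real.exp_le_exp.mpr hexp1
              have h9 : (0:ℝ) < Real.exp (-(r / d)) := Real.exp_pos _
              exact mul_le_mul_of_nonneg_right
                (mul_le_mul_of_nonneg_left hm (mul_nonneg hCβ.le hKd.le)) h9.le
      have h2 : ∀ ω ∈ (Set.Icc (-T) T)ᶜ,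
          ‖g ω * matFun (fun u => Complex.exp (Complex.I * ω * u)) H (x, s) (y, s')‖
          ≤ Cβ / T * Real.exp (-β * |ω|) := by
        intro ω hω
        have hTω : T < |ω| := by
          by_contra hcon
          push_neg at hcon
          exact hω (Set.mem_Icc.mpr (abs_le.mp hcon))
        have hone := norm_expEntry_le_one hH ω (x, s) (y, s')
        have habs : ‖g ω * (ω : ℂ)‖ = ‖g ω‖ * |ω| := by
          rw [norm_mul, Complex.norm_real, Real.norm_eq_abs]
        have h2a : ‖g ω‖ * T ≤ Cβ * Real.exp (-β * |ω|) := by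
          calc ‖g ω‖ * T ≤ ‖g ω‖ * |ω| := mul_le_mul_of_nonneg_left hTω.le (norm_nonneg _)
            _ = ‖g ω * (ω : ℂ)‖ := habs.symm
            _ ≤ _ := hg_decay ω
        have h2b : ‖g ω‖ ≤ Cβ / T * Real.exp (-β * |ω|) := by
          rw [div_mul_eq_mul_div, le_div_iff₀ hT0]
          exact h2a
        calc ‖g ω * matFun (fun u => Complex.exp (Complex.I * ω * u)) H (x, s) (y, s')‖
            = ‖g ω‖ * ‖matFun (fun u => Complex.exp (Complex.I * ω * u)) H (x, s) (y, s')‖ :=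
              norm_mul _ _
          _ ≤ ‖g ω‖ * 1 := mul_le_mul_of_nonneg_left hone (norm_nonneg _)
          _ = ‖g ω‖ := mul_one _
          _ ≤ _ := h2b
      have hib := norm_integral_split hβ hT0 (le_of_lt (div_pos hCβ hT0)) _ hφint h1 h2
      refine le_trans (mul_le_mul_of_nonneg_left hib (by positivity)) ?_
      have hKT : Kd * T ≤ r / d := by
        rw [hT, ← mul_div_assoc, div_le_div_iff₀ (mul_pos hd hmm0) hd]
        nlinarith [mul_le_mul_of_nonneg_right hKdmm (mul_nonneg hrpos.le hd.le)]
      have hterm1 : Cβ * Kd * Real.exp ((mm - β) * T) * Real.exp (-(r / d)) * (2 * T)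
          ≤ 2 * (Cβ * (r / d)) * E := by
        rw [mul_assoc (Cβ * Kd), hexpE1]
        calc Cβ * Kd * E * (2 * T) = (2 * Cβ * E) * (Kd * T) := by ring
          _ ≤ (2 * Cβ * E) * (r / d) :=
              mul_le_mul_of_nonneg_left hKT
                (mul_nonneg (mul_nonneg (by norm_num) hCβ.le) hE0.le)
          _ = 2 * (Cβ * (r / d)) * E := by ring
      have hterm2 : Cβ / T * (2 * (β⁻¹ * Real.exp (-(β * T))))
          ≤ (4 * (Cβ * (Kd / β)) + 4 * Cβ) * E := by
        rw [hexpE2]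
        have hTinv : Cβ / T = Cβ * (d * mm) / r := by
          rw [hT, div_div_eq_mul_div]
        have hmmle : mm ≤ Kd + β := max_le (by linarith) (by linarith)
        have hsuf : Cβ / T * β⁻¹ ≤ 2 * (Cβ * (Kd / β)) + 2 * Cβ := by
          rw [hTinv]
          have heq : Cβ * (d * mm) / r * β⁻¹ = Cβ * (d * mm) / (r * β) := by
            rw [← div_eq_mul_inv, div_div]
          rw [heq, div_le_iff₀ (mul_pos hrpos hβ)]
          have h8 : d * mm ≤ 2 * r * (Kd + β) :=
            mul_le_mul hd2r hmmle hmm0.le (mul_nonneg (by norm_num) hr0)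
          calc Cβ * (d * mm) ≤ Cβ * (2 * r * (Kd + β)) :=
              mul_le_mul_of_nonneg_left h8 hCβ.le
            _ = (2 * (Cβ * (Kd / β)) + 2 * Cβ) * (r * β) := by
                field_simp
        calc Cβ / T * (2 * (β⁻¹ * E)) = (Cβ / T * β⁻¹) * (2 * E) := by ring
          _ ≤ (2 * (Cβ * (Kd / β)) + 2 * Cβ) * (2 * E) :=
              mul_le_mul_of_nonneg_right hsuf (mul_nonneg (by norm_num) hE0.le)
          _ = (4 * (Cβ * (Kd / β)) + 4 * Cβ) * E := by ring
      have hπ6 : (2 * Real.pi)⁻¹ ≤ 6⁻¹ := by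
        apply inv_anti₀ (by norm_num)
        linarith [Real.pi_gt_three]
      have hCb2Y : Cβ ≤ 2 * (Cβ * (r / d)) := by
        nlinarith [mul_le_mul_of_nonneg_left hrd2 hCβ.le]
      have hsum0 : 0 ≤ 2 * (Cβ * (r / d)) * E + (4 * (Cβ * (Kd / β)) + 4 * Cβ) * E :=
        add_nonneg (mul_nonneg (by linarith) hE0.le) (mul_nonneg (by linarith) hE0.le)
      calc (2 * Real.pi)⁻¹ *
            (Cβ * Kd * Real.exp ((mm - β) * T) * Real.exp (-(r / d)) * (2 * T)
              + Cβ / T * (2 * (β⁻¹ * Real.exp (-(β * T)))))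
          ≤ (2 * Real.pi)⁻¹ *
            (2 * (Cβ * (r / d)) * E + (4 * (Cβ * (Kd / β)) + 4 * Cβ) * E) :=
            mul_le_mul_of_nonneg_left (add_le_add hterm1 hterm2) (by positivity)
        _ ≤ 6⁻¹ * (2 * (Cβ * (r / d)) * E + (4 * (Cβ * (Kd / β)) + 4 * Cβ) * E) :=
            mul_le_mul_of_nonneg_right hπ6 hsum0
        _ ≤ 2 * (M + Cβ * (Kd / β) + Cβ * (r / d)) * E := by
            nlinarith [mul_nonneg hM0 hE0.le, mul_nonneg hX0 hE0.le,
              mul_nonneg hY0 hE0.le, mul_le_mul_of_nonneg_right hCb2Y hE0.le]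
    have hblk : opNorm (matBlock (matFun f H) x y)
        ≤ 2 * (2 * (M + Cβ * (Kd / β) + Cβ * (r / d)) * E) :=
      opNorm_fin2_le _ fun s s' => hent s s'
    refine hblk.trans (le_of_eq ?_)
    rw [hE, show -r / d' = -(r / d') from neg_div d' r]
    ring


end Chiral

end
end

section
/- Let H be a Hermitian matrix indexed by pairs (x,s), x ∈ {0,…,n−1} a site and s ∈ {A,B}, which is short range with parameters d > 0, K_d > 0. Fix a site z ∈ {0,…,n−1} and let M_z be the invertible diagonal matrix acting on both internal components of site x by multiplication by e^{|x−z|/d}. Then the ℓ²-operator norm satisfies ‖M_z·H·M_z^{−1} − H‖ ≤ K_d. -/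
open MeasureTheory
open scoped ComplexOrder

noncomputable section

namespace Chiral

open scoped Matrix.Norms.L2Operator

lemma opNorm_eq_norm {m : Type*} [Fintype m] [DecidableEq m] (T : Matrix m m ℂ) :
    opNorm T = ‖T‖ := rfl

lemma schur_sum {ι : Type*} [Fintype ι] (a : ι → ι → ℝ) (ha : ∀ x y, 0 ≤ a x y)
    {K : ℝ} (hK : 0 ≤ K) (hrow : ∀ x, ∑ y, a x y ≤ K) (hcol : ∀ y, ∑ x, a x y ≤ K)
    (w : ι → ℝ) :
    ∑ x, (∑ y, a x y * w y) ^ 2 ≤ K ^ 2 * ∑ y, (w y) ^ 2 := by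
  have step1 : ∀ x, (∑ y, a x y * w y) ^ 2 ≤ K * ∑ y, a x y * (w y)^2 := by
    intro x
    have hcs := Finset.sum_mul_sq_le_sq_mul_sq Finset.univ
      (fun y => Real.sqrt (a x y)) (fun y => Real.sqrt (a x y) * w y)
    have he : ∀ y : ι, Real.sqrt (a x y) * (Real.sqrt (a x y) * w y) = a x y * w y := by
      intro y; rw [← mul_assoc, Real.mul_self_sqrt (ha x y)]
    have he2 : ∀ y : ι, (Real.sqrt (a x y))^2 = a x y := fun y => Real.sq_sqrt (ha x y)
    have he3 : ∀ y : ι, (Real.sqrt (a x y) * w y)^2 = a x y * (w y)^2 := by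
      intro y; rw [mul_pow, he2]
    simp only [he, he2, he3] at hcs
    calc (∑ y, a x y * w y) ^ 2 ≤ (∑ y, a x y) * ∑ y, a x y * (w y)^2 := hcs
      _ ≤ K * ∑ y, a x y * (w y)^2 := by
          apply mul_le_mul_of_nonneg_right (hrow x)
          exact Finset.sum_nonneg fun y _ => mul_nonneg (ha x y) (sq_nonneg _)
  calc ∑ x, (∑ y, a x y * w y) ^ 2 ≤ ∑ x, K * ∑ y, a x y * (w y)^2 :=
        Finset.sum_le_sum fun x _ => step1 x
    _ = K * ∑ y, (∑ x, a x y) * (w y)^2 := by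
        rw [← Finset.mul_sum, Finset.sum_comm]
        congr 1; apply Finset.sum_congr rfl; intro y _
        rw [Finset.sum_mul]
    _ ≤ K * ∑ y, K * (w y)^2 := by
        apply mul_le_mul_of_nonneg_left _ hK
        exact Finset.sum_le_sum fun y _ =>
          mul_le_mul_of_nonneg_right (hcol y) (sq_nonneg _)
    _ = K ^ 2 * ∑ y, (w y)^2 := by rw [← Finset.mul_sum]; ring

lemma opNorm_le_of_blocks {L : ℕ} (T : Matrix (Site L) (Site L) ℂ) (a : Fin L → Fin L → ℝ)
    (hab : ∀ x y, opNorm (matBlock T x y) ≤ a x y) (ha : ∀ x y, 0 ≤ a x y)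
    {K : ℝ} (hK : 0 ≤ K) (hrow : ∀ x, ∑ y, a x y ≤ K) (hcol : ∀ y, ∑ x, a x y ≤ K) :
    opNorm T ≤ K := by
  refine ContinuousLinearMap.opNorm_le_bound _ hK fun v => ?_
  set vb : Fin L → EuclideanSpace ℂ (Fin 2) :=
    fun y => (WithLp.equiv 2 _).symm (fun s' => v (y, s')) with hvb
  set w : Fin L → ℝ := fun y => ‖vb y‖ with hwdef
  have hTv : ∀ p : Site L, (Matrix.toEuclideanCLM (𝕜 := ℂ) T v) p = ∑ q, T p q * v q := by
    intro p
    have := congrFun (Matrix.ofLp_toEuclideanCLM (𝕜 := ℂ) T v) p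
    simpa [Matrix.mulVec, dotProduct] using this
  -- blockwise vector
  have key : ∀ x : Fin L,
      ((WithLp.equiv 2 _).symm (fun s => (Matrix.toEuclideanCLM (𝕜 := ℂ) T v) (x, s))
        : EuclideanSpace ℂ (Fin 2)) =
      ∑ y, ((WithLp.equiv 2 _).symm (Matrix.mulVec (matBlock T x y) (fun s' => v (y, s')))
        : EuclideanSpace ℂ (Fin 2)) := by
    intro x
    ext s
    rw [WithLp.ofLp_sum, Finset.sum_apply]
    simp only [WithLp.equiv_symm_apply, WithLp.ofLp_toLp, hTv]
    rw [Fintype.sum_prod_type]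
    apply Finset.sum_congr rfl; intro y _
    simp [Matrix.mulVec, dotProduct, matBlock]
  have hnormblock : ∀ x : Fin L,
      ‖((WithLp.equiv 2 _).symm (fun s => (Matrix.toEuclideanCLM (𝕜 := ℂ) T v) (x, s))
        : EuclideanSpace ℂ (Fin 2))‖ ≤ ∑ y, a x y * w y := by
    intro x
    rw [key x]
    refine (norm_sum_le _ _).trans (Finset.sum_le_sum fun y _ => ?_)
    have h1 := Matrix.l2_opNorm_mulVec (matBlock T x y) (vb y)
    have h2 : ((EuclideanSpace.equiv (Fin 2) ℂ).symm <| Matrix.mulVec (matBlock T x y) (vb y))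
        = ((WithLp.equiv 2 _).symm (Matrix.mulVec (matBlock T x y) (fun s' => v (y, s')))
          : EuclideanSpace ℂ (Fin 2)) := rfl
    rw [h2] at h1
    exact h1.trans (mul_le_mul_of_nonneg_right (hab x y) (norm_nonneg _))
  -- squared norms
  have hsq : ‖Matrix.toEuclideanCLM (𝕜 := ℂ) T v‖ ^ 2 = ∑ x : Fin L,
      ‖((WithLp.equiv 2 _).symm (fun s => (Matrix.toEuclideanCLM (𝕜 := ℂ) T v) (x, s))
        : EuclideanSpace ℂ (Fin 2))‖ ^ 2 := by
    rw [EuclideanSpace.norm_eq, Real.sq_sqrt (by positivity)]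
    rw [Fintype.sum_prod_type]
    apply Finset.sum_congr rfl; intro x _
    rw [EuclideanSpace.norm_eq, Real.sq_sqrt (by positivity)]
    simp [WithLp.equiv_symm_apply]
  have hvsq : ‖v‖ ^ 2 = ∑ y, (w y) ^ 2 := by
    rw [EuclideanSpace.norm_eq, Real.sq_sqrt (by positivity)]
    rw [Fintype.sum_prod_type]
    apply Finset.sum_congr rfl; intro y _
    show ∑ s' : Fin 2, ‖v (y, s')‖ ^ 2 = w y ^ 2
    have hws : w y = Real.sqrt (∑ s' : Fin 2, ‖v (y, s')‖ ^ 2) := by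
      show ‖vb y‖ = _
      rw [EuclideanSpace.norm_eq]
      rfl
    rw [hws, Real.sq_sqrt (by positivity)]
  have hfinal : ‖Matrix.toEuclideanCLM (𝕜 := ℂ) T v‖ ^ 2 ≤ (K * ‖v‖) ^ 2 := by
    rw [hsq]
    calc ∑ x : Fin L, ‖((WithLp.equiv 2 _).symm
            (fun s => (Matrix.toEuclideanCLM (𝕜 := ℂ) T v) (x, s))
            : EuclideanSpace ℂ (Fin 2))‖ ^ 2
        ≤ ∑ x : Fin L, (∑ y, a x y * w y) ^ 2 :=
          Finset.sum_le_sum fun x _ => pow_le_pow_left₀ (norm_nonneg _) (hnormblock x) 2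
      _ ≤ K ^ 2 * ∑ y, (w y) ^ 2 := schur_sum a ha hK hrow hcol w
      _ = (K * ‖v‖) ^ 2 := by rw [← hvsq]; ring
  have h0 : 0 ≤ K * ‖v‖ := mul_nonneg hK (norm_nonneg _)
  have := Real.sqrt_le_sqrt hfinal
  rwa [Real.sqrt_sq (norm_nonneg _), Real.sqrt_sq h0] at this


lemma abs_exp_sub_one_le (t : ℝ) : |Real.exp t - 1| ≤ Real.exp |t| - 1 := by
  rcases le_or_gt 0 t with h | h
  · rw [abs_of_nonneg h, abs_of_nonneg (sub_nonneg.2 (Real.one_le_exp h))]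
  · rw [abs_of_neg h, abs_of_nonpos (sub_nonpos.2 (Real.exp_le_one_iff.2 h.le))]
    nlinarith [Real.add_one_le_exp t, Real.add_one_le_exp (-t)]

theorem stmt13 {n : ℕ} (H : Matrix (Site n) (Site n) ℂ) (hH : H.IsHermitian)
    (d Kd : ℝ) (hd : 0 < d) (hKd : 0 < Kd) (hsr : FinShortRange H d Kd) (z : Fin n) :
    opNorm
        (Matrix.diagonal
            (fun p : Site n => (Real.exp (|((p.1 : ℕ) : ℝ) - ((z : ℕ) : ℝ)| / d) : ℂ)) *
          H *
          Matrix.diagonal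
            (fun p : Site n => (Real.exp (-(|((p.1 : ℕ) : ℝ) - ((z : ℕ) : ℝ)| / d)) : ℂ)) -
          H) ≤ Kd := by

  set e : Fin n → ℝ := fun x => |((x : ℕ) : ℝ) - ((z : ℕ) : ℝ)| / d with he
  set T : Matrix (Site n) (Site n) ℂ :=
    Matrix.diagonal
        (fun p : Site n => (Real.exp (|((p.1 : ℕ) : ℝ) - ((z : ℕ) : ℝ)| / d) : ℂ)) *
      H *
      Matrix.diagonal
        (fun p : Site n => (Real.exp (-(|((p.1 : ℕ) : ℝ) - ((z : ℕ) : ℝ)| / d)) : ℂ)) -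
      H with hT
  have hentry : ∀ p q : Site n,
      T p q = ((Real.exp (e p.1 - e q.1) - 1 : ℝ) : ℂ) * H p q := by
    intro p q
    rw [hT]
    simp only [Matrix.sub_apply, Matrix.mul_diagonal, Matrix.diagonal_mul]
    have h1 : (Real.exp (e p.1) : ℂ) * H p q * (Real.exp (-(e q.1)) : ℂ)
        = ((Real.exp (e p.1) * Real.exp (-(e q.1)) : ℝ) : ℂ) * H p q := by
      push_cast; ring
    rw [h1, ← Real.exp_add]
    push_cast
    ring_nf
  have hblock : ∀ x y : Fin n,
      matBlock T x y = ((Real.exp (e x - e y) - 1 : ℝ) : ℂ) • matBlock H x y := by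
    intro x y
    ext s s'
    simp [matBlock, hentry, Matrix.smul_apply]
  have hnormT : ∀ x y : Fin n,
      opNorm (matBlock T x y) = |Real.exp (e x - e y) - 1| * opNorm (matBlock H x y) := by
    intro x y
    rw [hblock, opNorm_eq_norm, opNorm_eq_norm, norm_smul, Complex.norm_real,
      Real.norm_eq_abs]
  set a : Fin n → Fin n → ℝ := fun x y =>
    (Real.exp (|((x : ℕ) : ℝ) - ((y : ℕ) : ℝ)| / d) - 1) * opNorm (matBlock H x y) with ha
  have hexp1 : ∀ x y : Fin n, 1 ≤ Real.exp (|((x : ℕ) : ℝ) - ((y : ℕ) : ℝ)| / d) := by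
    intro x y
    apply Real.one_le_exp
    positivity
  have hanonneg : ∀ x y : Fin n, 0 ≤ a x y := by
    intro x y
    apply mul_nonneg (by linarith [hexp1 x y])
    rw [opNorm_eq_norm]; exact norm_nonneg _
  have hab : ∀ x y : Fin n, opNorm (matBlock T x y) ≤ a x y := by
    intro x y
    rw [hnormT, ha]
    apply mul_le_mul_of_nonneg_right _ (by rw [opNorm_eq_norm]; exact norm_nonneg _)
    refine (abs_exp_sub_one_le _).trans ?_
    have h1 : |e x - e y| ≤ |((x : ℕ) : ℝ) - ((y : ℕ) : ℝ)| / d := by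
      rw [he]
      have h2 : |((x : ℕ) : ℝ) - ((z : ℕ) : ℝ)| / d - |((y : ℕ) : ℝ) - ((z : ℕ) : ℝ)| / d
          = (|((x : ℕ) : ℝ) - ((z : ℕ) : ℝ)| - |((y : ℕ) : ℝ) - ((z : ℕ) : ℝ)|) / d := by
        ring
      show |(fun x => |((x : ℕ) : ℝ) - ((z : ℕ) : ℝ)| / d) x
          - (fun x => |((x : ℕ) : ℝ) - ((z : ℕ) : ℝ)| / d) y| ≤ _
      simp only []
      rw [h2, abs_div, abs_of_pos hd]
      apply div_le_div_of_nonneg_right _ hd.le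
      calc |(|((x : ℕ) : ℝ) - ((z : ℕ) : ℝ)| - |((y : ℕ) : ℝ) - ((z : ℕ) : ℝ)|)|
          ≤ |(((x : ℕ) : ℝ) - ((z : ℕ) : ℝ)) - (((y : ℕ) : ℝ) - ((z : ℕ) : ℝ))| :=
          abs_abs_sub_abs_le_abs_sub _ _
        _ = |((x : ℕ) : ℝ) - ((y : ℕ) : ℝ)| := by ring_nf
    have h3 := Real.exp_le_exp.2 h1
    linarith
  have hrowgen : ∀ x : Fin n, ∑ y, a x y ≤ Kd := by
    intro x
    have hsplit : ∑ y, a x y =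
        (∑ y, opNorm (matBlock H x y) * Real.exp (|((x : ℕ) : ℝ) - ((y : ℕ) : ℝ)| / d))
          - ∑ y, opNorm (matBlock H x y) := by
      rw [← Finset.sum_sub_distrib]
      apply Finset.sum_congr rfl
      intro y _
      rw [ha]; ring
    have hnn : 0 ≤ ∑ y, opNorm (matBlock H x y) :=
      Finset.sum_nonneg fun y _ => by rw [opNorm_eq_norm]; exact norm_nonneg _
    have h4 := hsr x
    rw [hsplit]
    linarith
  have hsym : ∀ x y : Fin n, opNorm (matBlock H x y) = opNorm (matBlock H y x) := by
    intro x y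
    have hb : matBlock H x y = (matBlock H y x).conjTranspose := by
      ext s s'
      simp only [matBlock, Matrix.conjTranspose_apply, Matrix.of_apply]
      exact (hH.apply (x, s) (y, s')).symm
    rw [hb, opNorm_eq_norm, opNorm_eq_norm, Matrix.l2_opNorm_conjTranspose]
  have hcol : ∀ y : Fin n, ∑ x, a x y ≤ Kd := by
    intro y
    have h5 : ∑ x, a x y = ∑ x, a y x := by
      apply Finset.sum_congr rfl
      intro x _
      rw [ha]
      simp only []
      rw [hsym x y, abs_sub_comm]
    rw [h5]
    exact hrowgen y
  exact opNorm_le_of_blocks T a hab hanonneg hKd.le hrowgen hcol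


end Chiral

end
end
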